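/- (Serfling's inequality, special consequence) Let c_1, …, c_n ∈ [−D, D] be real numbers and select k of them uniformly at random without replacement; let X be their sum. Then E[X] = (k/n)·Σ_i c_i and for every t > 0, Pr[X − E[X] ≥ t] ≤ exp(−2t²/(k·(2D)²)) = exp(−t²/(2kD²)). -/

import Mathlib

open Finset in
lemma esymm_insert {α : Type*} [DecidableEq α] {a : α} {s : Finset α} (h : a ∉ s)
    (x : α → ℝ) (j : ℕ) :
    ∑ P ∈ (insert a s).powersetCard (j+1), ∏ i ∈ P, x i
      = (∑ P ∈ s.powersetCard (j+1), ∏ i ∈ P, x i)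
        + x a * ∑ P ∈ s.powersetCard j, ∏ i ∈ P, x i := by
  rw [Finset.powersetCard_succ_insert h, Finset.sum_union]
  · congr 1
    rw [Finset.sum_image, Finset.mul_sum]
    · exact Finset.sum_congr rfl fun P hP => Finset.prod_insert
        (fun hx => h ((Finset.mem_powersetCard.1 hP).1 hx))
    · intro P hP Q hQ hPQ
      rw [← Finset.erase_insert (fun hx => h ((Finset.mem_powersetCard.1 hP).1 hx)),
        ← Finset.erase_insert (fun hx : a ∈ Q => h ((Finset.mem_powersetCard.1 hQ).1 hx)), hPQ]
  · rw [Finset.disjoint_right]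
    intro P hP hP'
    simp only [Finset.mem_image] at hP
    obtain ⟨Q, hQ, rfl⟩ := hP
    exact h ((Finset.mem_powersetCard.1 hP').1 (Finset.mem_insert_self a Q))

lemma tangent_le (a v : ℝ) (ha : 0 ≤ a) (hv : 0 ≤ v) (k : ℕ) :
    a^k + k * a^(k-1) * (v - a) ≤ v^k := by
  cases k with
  | zero => simp
  | succ j =>
    rcases eq_or_lt_of_le ha with h0 | h0
    · subst h0
      cases j with
      | zero => simp
      | succ i => simp [zero_pow]; positivity
    · have h2 : (-2:ℝ) ≤ (v-a)/a := by
        have : (-1:ℝ) ≤ (v-a)/a := by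
          rw [le_div_iff₀ h0]; nlinarith
        linarith
      have key := one_add_mul_le_pow h2 (j+1)
      have e : 1 + (v-a)/a = v/a := by field_simp; ring
      rw [e, div_pow] at key
      have := mul_le_mul_of_nonneg_right key (le_of_lt (pow_pos h0 (j+1)))
      rw [div_mul_cancel₀] at this
      · push_cast at this ⊢
        calc a^(j+1) + ((j:ℝ)+1) * a^(j+1-1) * (v-a)
            = (1 + ((j:ℝ)+1) * ((v-a)/a)) * a^(j+1) := by
              simp only [Nat.add_sub_cancel]; field_simp; ring
          _ ≤ v^(j+1) := this
      · positivity

lemma esymm_nonneg {α : Type*} (s : Finset α) (x : α → ℝ) (hx : ∀ i ∈ s, 0 ≤ x i) (k : ℕ) :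
    0 ≤ ∑ P ∈ s.powersetCard k, ∏ i ∈ P, x i := by
  apply Finset.sum_nonneg
  intro P hP
  exact Finset.prod_nonneg fun i hi => hx i ((Finset.mem_powersetCard.1 hP).1 hi)

lemma maclaurin {α : Type*} [DecidableEq α] (s : Finset α) (x : α → ℝ) :
    ∀ k, (∀ i ∈ s, 0 ≤ x i) →
    ∑ P ∈ s.powersetCard k, ∏ i ∈ P, x i
      ≤ (s.card.choose k) * ((∑ i ∈ s, x i)/s.card)^k := by
  induction s using Finset.cons_induction with
  | empty =>
    intro k _
    cases k with
    | zero => simp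
    | succ j => simp [Finset.powersetCard_eq_empty.2 (show (∅ : Finset α).card < j+1 by simp)]
  | cons b s hb IH =>
    intro k hx
    have hx' : ∀ i ∈ s, 0 ≤ x i := fun i hi => hx i (Finset.mem_cons_of_mem hi)
    have hxb : 0 ≤ x b := hx b (Finset.mem_cons_self b s)
    cases k with
    | zero => simp
    | succ j =>
      set m := s.card with hm
      set S' := ∑ i ∈ s, x i with hS'
      have hS'0 : 0 ≤ S' := Finset.sum_nonneg hx'
      set aa := S'/m with haa
      have haa0 : 0 ≤ aa := by positivity
      have hma : (m:ℝ) * aa = S' := by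
        rcases Nat.eq_zero_or_pos m with h0 | h0
        · have hse : s = ∅ := Finset.card_eq_zero.1 h0
          simp [haa, hS', hse, h0]
        · rw [haa]; field_simp
      set S := ∑ i ∈ Finset.cons b s hb, x i with hS
      have hSe : S = x b + S' := Finset.sum_cons hb
      set v := S/(m+1) with hv
      have hv0 : 0 ≤ v := by
        rw [hv, hSe]; positivity
      have hmv : ((m:ℝ)+1) * v = S := by
        rw [hv]; field_simp
      -- recursion
      have hrec : ∑ P ∈ (Finset.cons b s hb).powersetCard (j+1), ∏ i ∈ P, x i
          = (∑ P ∈ s.powersetCard (j+1), ∏ i ∈ P, x i)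
            + x b * ∑ P ∈ s.powersetCard j, ∏ i ∈ P, x i := by
        rw [Finset.cons_eq_insert]; exact esymm_insert hb x j
      have hA := IH (j+1) hx'
      have hB := IH j hx'
      -- cast identities
      have P1 : ((m+1).choose (j+1) : ℝ) = (m.choose (j+1) : ℝ) + (m.choose j : ℝ) := by
        rw [Nat.choose_succ_succ]; push_cast; ring
      have P2 : ((j:ℝ)+1) * ((m+1).choose (j+1) : ℝ) = ((m:ℝ)+1) * (m.choose j : ℝ) := by
        have := Nat.add_one_mul_choose_eq m j
        have := congrArg (Nat.cast : ℕ → ℝ) this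
        push_cast at this
        linarith
      have key : (m.choose (j+1) : ℝ) * aa^(j+1) + x b * ((m.choose j : ℝ) * aa^j)
          = ((m+1).choose (j+1) : ℝ) * (aa^(j+1) + ((j:ℝ)+1) * aa^j * (v - aa)) := by
        have hxb' : x b = ((m:ℝ)+1)*v - (m:ℝ)*aa := by
          rw [hmv, hma, hSe]; ring
        rw [hxb']
        linear_combination (aa^(j+1) - aa^j*v) * P2 - aa^(j+1) * P1
      have htan : aa^(j+1) + ((j:ℝ)+1) * aa^j * (v - aa) ≤ v^(j+1) := by
        have := tangent_le aa v haa0 hv0 (j+1)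
        push_cast at this
        simpa [Nat.add_sub_cancel] using this
      calc ∑ P ∈ (Finset.cons b s hb).powersetCard (j+1), ∏ i ∈ P, x i
          = (∑ P ∈ s.powersetCard (j+1), ∏ i ∈ P, x i)
            + x b * ∑ P ∈ s.powersetCard j, ∏ i ∈ P, x i := hrec
        _ ≤ (m.choose (j+1) : ℝ) * aa^(j+1) + x b * ((m.choose j : ℝ) * aa^j) := by
            gcongr
        _ = ((m+1).choose (j+1) : ℝ) * (aa^(j+1) + ((j:ℝ)+1) * aa^j * (v - aa)) := key
        _ ≤ ((m+1).choose (j+1) : ℝ) * v^(j+1) := by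
            apply mul_le_mul_of_nonneg_left htan (by positivity)
        _ = ((Finset.cons b s hb).card.choose (j+1) : ℝ)
              * ((∑ i ∈ Finset.cons b s hb, x i)/(Finset.cons b s hb).card)^(j+1) := by
            rw [Finset.card_cons, hv]
            push_cast
            ring

lemma hoeffding_scalar (u : ℝ) (hu1 : -1 ≤ u) (hu2 : u ≤ 1) :
    ∀ h : ℝ, 0 ≤ h → Real.cosh h + u * Real.sinh h ≤ Real.exp (u*h + h^2/2) := by
  set d : ℝ → ℝ := fun x => Real.cosh x + u * Real.sinh x with hd
  set N : ℝ → ℝ := fun x => Real.sinh x + u * Real.cosh x with hN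
  have hdpos : ∀ x : ℝ, 0 ≤ x → 0 < d x := by
    intro x hx
    have h2 : 0 ≤ Real.sinh x := Real.sinh_nonneg_iff.2 hx
    have h3 : 0 < Real.cosh x - Real.sinh x := by
      rw [Real.cosh_sub_sinh]; exact Real.exp_pos _
    have : -Real.sinh x ≤ u * Real.sinh x := by nlinarith
    simp only [hd]; nlinarith
  have hdderiv : ∀ x : ℝ, HasDerivAt d (N x) x := by
    intro x
    exact ((Real.hasDerivAt_cosh x).add ((Real.hasDerivAt_sinh x).const_mul u))
  have hNderiv : ∀ x : ℝ, HasDerivAt N (d x) x := by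
    intro x
    exact ((Real.hasDerivAt_sinh x).add ((Real.hasDerivAt_cosh x).const_mul u))
  set G : ℝ → ℝ := fun x => u + x - N x / d x with hG
  have hGderiv : ∀ x : ℝ, 0 ≤ x → HasDerivAt G (N x ^ 2 / d x ^ 2) x := by
    intro x hx
    have hne : d x ≠ 0 := (hdpos x hx).ne'
    have h1 : HasDerivAt (fun y => N y / d y) ((d x * d x - N x * N x) / d x ^ 2) x :=
      (hNderiv x).div (hdderiv x) hne
    have h2 : HasDerivAt (fun y => u + y) 1 x := (hasDerivAt_id x).const_add u
    have := h2.sub h1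
    refine this.congr_deriv ?_
    field_simp
    ring
  have hG0 : G 0 = 0 := by simp [hG, hN, hd]
  have hGmono : MonotoneOn G (Set.Ici 0) := by
    apply monotoneOn_of_deriv_nonneg (convex_Ici 0)
    · intro x hx
      exact ((hGderiv x hx).continuousAt).continuousWithinAt
    · intro x hx
      rw [interior_Ici] at hx
      exact (hGderiv x (le_of_lt hx)).differentiableAt.differentiableWithinAt
    · intro x hx
      rw [interior_Ici] at hx
      rw [(hGderiv x (le_of_lt hx)).deriv]
      positivity
  have hGnn : ∀ x : ℝ, 0 ≤ x → 0 ≤ G x := by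
    intro x hx
    rw [← hG0]
    exact hGmono Set.self_mem_Ici hx hx
  set F : ℝ → ℝ := fun x => u * x + x^2/2 - Real.log (d x) with hF
  have hFderiv : ∀ x : ℝ, 0 ≤ x → HasDerivAt F (G x) x := by
    intro x hx
    have hne : d x ≠ 0 := (hdpos x hx).ne'
    have h1 : HasDerivAt (fun y => Real.log (d y)) (N x / d x) x := by
      simpa using (hdderiv x).log hne
    have h2 : HasDerivAt (fun y => u * y + y^2/2) (u + x) x := by
      have h3 := ((hasDerivAt_id x).const_mul u).add
        (((hasDerivAt_id x).pow 2).div_const 2)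
      refine h3.congr_deriv ?_
      push_cast
      simp
    exact h2.sub h1
  have hFmono : MonotoneOn F (Set.Ici 0) := by
    apply monotoneOn_of_deriv_nonneg (convex_Ici 0)
    · intro x hx
      exact ((hFderiv x hx).continuousAt).continuousWithinAt
    · intro x hx
      rw [interior_Ici] at hx
      exact (hFderiv x (le_of_lt hx)).differentiableAt.differentiableWithinAt
    · intro x hx
      rw [interior_Ici] at hx
      rw [(hFderiv x (le_of_lt hx)).deriv]
      exact hGnn x (le_of_lt hx)
  have hF0 : F 0 = 0 := by simp [hF, hd]
  intro h hh
  have : 0 ≤ F h := by rw [← hF0]; exact hFmono Set.self_mem_Ici hh hh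
  have hlog : Real.log (d h) ≤ u * h + h^2/2 := by
    simp only [hF] at this; linarith
  calc d h = Real.exp (Real.log (d h)) := (Real.exp_log (hdpos h hh)).symm
    _ ≤ Real.exp (u*h + h^2/2) := Real.exp_le_exp.2 hlog

lemma sum_over_subsets {n k : ℕ} (hk : 0 < k) (c : Fin n → ℝ) :
    ∑ P ∈ (Finset.univ : Finset (Fin n)).powersetCard k, ∑ i ∈ P, c i
      = ((n-1).choose (k-1) : ℝ) * ∑ i, c i := by
  have hcard : ∀ i : Fin n,
      (((Finset.univ : Finset (Fin n)).powersetCard k).filter (fun P => i ∈ P)).card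
        = (n-1).choose (k-1) := by
    intro i
    have hce : (Finset.univ.erase i).card = n - 1 := by
      rw [Finset.card_erase_of_mem (Finset.mem_univ i), Finset.card_univ, Fintype.card_fin]
    rw [← hce, ← Finset.card_powersetCard]
    refine Finset.card_bij' (fun P _ => P.erase i) (fun Q _ => insert i Q) ?hi ?hj ?li ?ri
    case hi =>
      intro P hP
      simp only [Finset.mem_filter, Finset.mem_powersetCard] at hP
      simp only [Finset.mem_powersetCard]
      refine ⟨fun j hj => ?_, ?_⟩
      · rw [Finset.mem_erase] at hj ⊢
        exact ⟨hj.1, Finset.mem_univ _⟩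
      · rw [Finset.card_erase_of_mem hP.2, hP.1.2]
    case hj =>
      intro Q hQ
      simp only [Finset.mem_powersetCard] at hQ
      have hiQ : i ∉ Q := fun h => (Finset.mem_erase.1 (hQ.1 h)).1 rfl
      simp only [Finset.mem_filter, Finset.mem_powersetCard]
      refine ⟨⟨fun j _ => Finset.mem_univ _, ?_⟩, Finset.mem_insert_self _ _⟩
      rw [Finset.card_insert_of_notMem hiQ, hQ.2, Nat.sub_add_cancel hk]
    case li =>
      intro P hP
      simp only [Finset.mem_filter] at hP
      exact Finset.insert_erase hP.2
    case ri =>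
      intro Q hQ
      simp only [Finset.mem_powersetCard] at hQ
      have hiQ : i ∉ Q := fun h => (Finset.mem_erase.1 (hQ.1 h)).1 rfl
      exact Finset.erase_insert hiQ
  calc ∑ P ∈ (Finset.univ : Finset (Fin n)).powersetCard k, ∑ i ∈ P, c i
      = ∑ P ∈ (Finset.univ : Finset (Fin n)).powersetCard k,
          ∑ i : Fin n, if i ∈ P then c i else 0 := by
        apply Finset.sum_congr rfl
        intro P _
        rw [Finset.sum_ite_mem, Finset.univ_inter]
    _ = ∑ i : Fin n, ∑ P ∈ (Finset.univ : Finset (Fin n)).powersetCard k,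
          if i ∈ P then c i else 0 := Finset.sum_comm
    _ = ∑ i : Fin n, ((n-1).choose (k-1) : ℝ) * c i := by
        apply Finset.sum_congr rfl
        intro i _
        rw [← Finset.sum_filter, Finset.sum_const, hcard i, nsmul_eq_mul]
    _ = ((n-1).choose (k-1) : ℝ) * ∑ i, c i := by rw [Finset.mul_sum]

/-- Serfling's inequality, special consequence: for values
`c₁,…,cₙ ∈ [−D,D]` and `X` the sum of `k` of them chosen uniformly at random
without replacement, `E[X] = (k/n)·Σᵢ cᵢ` and for `t > 0`,
`Pr[X − E[X] ≥ t] ≤ exp(−2t²/(k(2D)²)) = exp(−t²/(2kD²))`. -/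
theorem stmt_9 (n k : ℕ) (hkpos : 0 < k) (hkn : k ≤ n)
    (D t : ℝ) (ht : 0 < t)
    (c : Fin n → ℝ) (hc : ∀ i, -D ≤ c i ∧ c i ≤ D)
    (μ : ℝ) (hμ : μ = ((k : ℝ) / n) * ∑ i, c i) :
    (((n.choose k : ℝ))⁻¹ *
        ∑ P ∈ (Finset.univ : Finset (Fin n)).powersetCard k, ∑ i ∈ P, c i = μ) ∧
    ((((Finset.univ : Finset (Fin n)).powersetCard k).filter
        (fun P => (∑ i ∈ P, c i) - μ ≥ t)).card : ℝ) / (n.choose k : ℝ) ≤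
      Real.exp (-(2 * t ^ 2) / (k * (2 * D) ^ 2)) ∧
    Real.exp (-(2 * t ^ 2) / (k * (2 * D) ^ 2)) =
      Real.exp (-(t ^ 2) / (2 * k * D ^ 2)) := by
  have hn : 0 < n := lt_of_lt_of_le hkpos hkn
  have hn0 : (n:ℝ) ≠ 0 := Nat.cast_ne_zero.2 hn.ne'
  have hk0 : (k:ℝ) ≠ 0 := Nat.cast_ne_zero.2 hkpos.ne'
  have hC : 0 < (n.choose k : ℝ) := Nat.cast_pos.2 (Nat.choose_pos hkn)
  have hD0 : 0 ≤ D := by have := hc ⟨0, hn⟩; linarith [this.1, this.2]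
  -- exponent equality (part 3)
  have hexpeq : Real.exp (-(2 * t ^ 2) / (k * (2 * D) ^ 2)) =
      Real.exp (-(t ^ 2) / (2 * k * D ^ 2)) := by
    rw [show (k:ℝ) * (2*D)^2 = 2 * (2*k*D^2) by ring,
      show -(2 * t^2) = 2 * -(t^2) by ring,
      mul_div_mul_left _ _ (two_ne_zero)]
  -- part 1
  have hid : (n:ℝ) * ((n-1).choose (k-1) : ℝ) = (k:ℝ) * (n.choose k : ℝ) := by
    have h1 := Nat.add_one_mul_choose_eq (n-1) (k-1)
    rw [Nat.sub_add_cancel hn,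
      Nat.sub_add_cancel hkpos] at h1
    have h2 := congrArg (Nat.cast : ℕ → ℝ) h1
    push_cast at h2
    linarith
  have hpart1 : ((n.choose k : ℝ))⁻¹ *
      ∑ P ∈ (Finset.univ : Finset (Fin n)).powersetCard k, ∑ i ∈ P, c i = μ := by
    rw [sum_over_subsets hkpos c, hμ]
    rw [inv_mul_eq_div, div_eq_iff hC.ne']
    rw [div_mul_eq_mul_div, div_mul_eq_mul_div, eq_div_iff hn0]
    linear_combination (∑ i, c i) * hid
  refine ⟨hpart1, ?_, hexpeq⟩
  -- part 2
  rw [hexpeq]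
  rcases eq_or_lt_of_le hD0 with hD | hD
  · -- D = 0
    have hc0 : ∀ i, c i = 0 := fun i =>
      le_antisymm ((hc i).2.trans (le_of_eq hD.symm)) (by have := (hc i).1; linarith)
    have hfe : (((Finset.univ : Finset (Fin n)).powersetCard k).filter
        (fun P => (∑ i ∈ P, c i) - μ ≥ t)) = ∅ := by
      apply Finset.filter_false_of_mem
      intro P _
      have hS : ∑ i ∈ P, c i = 0 := Finset.sum_eq_zero fun i _ => hc0 i
      have hμ0 : μ = 0 := by rw [hμ]; simp [Finset.sum_eq_zero fun i _ => hc0 i]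
      rw [hS, hμ0]
      simp
      linarith
    rw [hfe]
    simp
    positivity
  · -- D > 0
    set lam := t / (k * D^2) with hlam
    have hlam0 : 0 < lam := by positivity
    set h := lam * D with hhdef
    have hh0 : 0 ≤ h := by positivity
    set cbar := (∑ i, c i) / n with hcbar
    have hμ' : μ = k * cbar := by rw [hμ, hcbar]; ring
    set u := cbar / D with hu
    have habs : -D ≤ cbar ∧ cbar ≤ D := by
      constructor
      · rw [hcbar, le_div_iff₀ (by exact_mod_cast hn)]
        calc -D * n = ∑ _i : Fin n, (-D) := by simp [Finset.sum_const]; ring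
          _ ≤ ∑ i, c i := Finset.sum_le_sum fun i _ => (hc i).1
      · rw [hcbar, div_le_iff₀ (by exact_mod_cast hn)]
        calc ∑ i, c i ≤ ∑ _i : Fin n, D := Finset.sum_le_sum fun i _ => (hc i).2
          _ = D * n := by simp [Finset.sum_const]; ring
    have hu1 : -1 ≤ u := by rw [hu, le_div_iff₀ hD]; linarith [habs.1]
    have hu2 : u ≤ 1 := by rw [hu, div_le_iff₀ hD]; linarith [habs.2]
    -- per-coordinate convexity bound
    have key1 : ∀ i, Real.exp (lam * c i) ≤ Real.cosh h + (c i / D) * Real.sinh h := by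
      intro i
      have hθ : 0 ≤ (D - c i)/(2*D) := by
        apply div_nonneg; linarith [(hc i).2]; linarith
      have hη : 0 ≤ (D + c i)/(2*D) := by
        apply div_nonneg; linarith [(hc i).1]; linarith
      have hsum1 : (D - c i)/(2*D) + (D + c i)/(2*D) = 1 := by field_simp; ring
      have hcx := convexOn_exp.2 (Set.mem_univ (-(lam*D))) (Set.mem_univ (lam*D))
        hθ hη hsum1
      simp only [smul_eq_mul] at hcx
      have e1 : (D - c i)/(2*D) * -(lam*D) + (D + c i)/(2*D) * (lam*D) = lam * c i := by
        field_simp; ring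
      rw [e1] at hcx
      calc Real.exp (lam * c i)
          ≤ (D - c i)/(2*D) * Real.exp (-(lam*D)) + (D + c i)/(2*D) * Real.exp (lam*D) := hcx
        _ = Real.cosh h + (c i / D) * Real.sinh h := by
            rw [hhdef, Real.cosh_eq, Real.sinh_eq]
            field_simp
            ring
    -- average bound
    have havg : (∑ i, Real.exp (lam * c i)) / n ≤ Real.cosh h + u * Real.sinh h := by
      rw [div_le_iff₀ (by exact_mod_cast hn)]
      calc ∑ i, Real.exp (lam * c i)
          ≤ ∑ i, (Real.cosh h + (c i / D) * Real.sinh h) :=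
            Finset.sum_le_sum fun i _ => key1 i
        _ = n * Real.cosh h + ((∑ i, c i) / D) * Real.sinh h := by
            rw [Finset.sum_add_distrib, ← Finset.sum_mul, ← Finset.sum_div,
              Finset.sum_const, Finset.card_univ, Fintype.card_fin, nsmul_eq_mul]
        _ = (Real.cosh h + u * Real.sinh h) * n := by
            rw [hu, hcbar]
            field_simp
    -- Chernoff
    have step1 : ((((Finset.univ : Finset (Fin n)).powersetCard k).filter (fun P => (∑ i ∈ P, c i) - μ ≥ t)).card : ℝ)
        ≤ ∑ P ∈ (Finset.univ : Finset (Fin n)).powersetCard k, Real.exp (lam * ((∑ i ∈ P, c i) - μ - t)) := by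
      calc ((((Finset.univ : Finset (Fin n)).powersetCard k).filter (fun P => (∑ i ∈ P, c i) - μ ≥ t)).card : ℝ)
          = ∑ P ∈ ((Finset.univ : Finset (Fin n)).powersetCard k).filter (fun P => (∑ i ∈ P, c i) - μ ≥ t), (1:ℝ) := by
            rw [Finset.sum_const]; simp
        _ ≤ ∑ P ∈ ((Finset.univ : Finset (Fin n)).powersetCard k).filter (fun P => (∑ i ∈ P, c i) - μ ≥ t), Real.exp (lam * ((∑ i ∈ P, c i) - μ - t)) := by
            apply Finset.sum_le_sum
            intro P hP
            have := (Finset.mem_filter.1 hP).2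
            apply Real.one_le_exp
            have : 0 ≤ (∑ i ∈ P, c i) - μ - t := by linarith [this]
            positivity
        _ ≤ ∑ P ∈ (Finset.univ : Finset (Fin n)).powersetCard k, Real.exp (lam * ((∑ i ∈ P, c i) - μ - t)) := by
            apply Finset.sum_le_sum_of_subset_of_nonneg (Finset.filter_subset _ _)
            intro P _ _
            positivity
    have step2 : ∑ P ∈ (Finset.univ : Finset (Fin n)).powersetCard k, Real.exp (lam * ((∑ i ∈ P, c i) - μ - t))
        = Real.exp (-(lam * (μ + t))) * ∑ P ∈ (Finset.univ : Finset (Fin n)).powersetCard k, ∏ i ∈ P, Real.exp (lam * c i) := by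
      rw [Finset.mul_sum]
      apply Finset.sum_congr rfl
      intro P _
      rw [← Real.exp_sum, ← Real.exp_add]
      congr 1
      rw [← Finset.mul_sum]
      ring
    have step3 : ∑ P ∈ (Finset.univ : Finset (Fin n)).powersetCard k, ∏ i ∈ P, Real.exp (lam * c i)
        ≤ (n.choose k : ℝ) * ((∑ i, Real.exp (lam * c i)) / n)^k := by
      have := maclaurin (Finset.univ : Finset (Fin n)) (fun i => Real.exp (lam * c i)) k
        (fun i _ => (Real.exp_pos _).le)
      rwa [Finset.card_univ, Fintype.card_fin] at this
    have step4 : ((∑ i, Real.exp (lam * c i)) / n)^k ≤ Real.exp (k * (u * h + h^2/2)) := by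
      have hb : (∑ i, Real.exp (lam * c i)) / n ≤ Real.exp (u * h + h^2/2) :=
        le_trans havg (hoeffding_scalar u hu1 hu2 h hh0)
      calc ((∑ i, Real.exp (lam * c i)) / n)^k
          ≤ (Real.exp (u * h + h^2/2))^k := by
            apply pow_le_pow_left₀ (by positivity) hb
        _ = Real.exp (k * (u * h + h^2/2)) := by
            rw [← Real.exp_nat_mul]
    -- combine
    have hfinal : ((((Finset.univ : Finset (Fin n)).powersetCard k).filter (fun P => (∑ i ∈ P, c i) - μ ≥ t)).card : ℝ)
        ≤ (n.choose k : ℝ) * Real.exp (-(t^2) / (2*k*D^2)) := by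
      have hexp2 : Real.exp (-(lam * (μ + t))) * ((n.choose k : ℝ) * Real.exp (k * (u * h + h^2/2)))
          = (n.choose k : ℝ) * Real.exp (-(t^2) / (2*k*D^2)) := by
        rw [mul_comm (Real.exp _) _, mul_assoc, ← Real.exp_add]
        congr 2
        rw [hμ', hu, hhdef, hlam]
        field_simp
        ring
      calc ((((Finset.univ : Finset (Fin n)).powersetCard k).filter (fun P => (∑ i ∈ P, c i) - μ ≥ t)).card : ℝ)
          ≤ ∑ P ∈ (Finset.univ : Finset (Fin n)).powersetCard k, Real.exp (lam * ((∑ i ∈ P, c i) - μ - t)) := step1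
        _ = Real.exp (-(lam * (μ + t))) * ∑ P ∈ (Finset.univ : Finset (Fin n)).powersetCard k, ∏ i ∈ P, Real.exp (lam * c i) := step2
        _ ≤ Real.exp (-(lam * (μ + t))) * ((n.choose k : ℝ) * ((∑ i, Real.exp (lam * c i)) / n)^k) := by
            apply mul_le_mul_of_nonneg_left step3 (Real.exp_pos _).le
        _ ≤ Real.exp (-(lam * (μ + t))) * ((n.choose k : ℝ) * Real.exp (k * (u * h + h^2/2))) := by
            apply mul_le_mul_of_nonneg_left _ (Real.exp_pos _).le
            apply mul_le_mul_of_nonneg_left step4 hC.le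
        _ = (n.choose k : ℝ) * Real.exp (-(t^2) / (2*k*D^2)) := hexp2
    rw [div_le_iff₀ hC]
    calc ((((Finset.univ : Finset (Fin n)).powersetCard k).filter (fun P => (∑ i ∈ P, c i) - μ ≥ t)).card : ℝ)
        ≤ (n.choose k : ℝ) * Real.exp (-(t^2) / (2*k*D^2)) := hfinal
      _ = Real.exp (-(t^2) / (2*k*D^2)) * (n.choose k : ℝ) := mul_comm _ _
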